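/- Let A be an m×n real matrix, b ∈ ℝ^m, p ≥ 1, γ > 0, and let (μ_k)_{k≥0} be a nondecreasing sequence of positive reals with ∑_k 1/√μ_k < ∞. Let (u^k), (v^k), (λ^k) be sequences in ℝ^n satisfying for all k: u^{k+1} minimizes w ↦ γ‖∇w‖₀ + (μ_k/2)‖w − (v^k − λ^k/μ_k)‖₂²; v^{k+1} minimizes w ↦ ‖Aw − b‖_p^p + (μ_k/2)‖w − (u^{k+1} + λ^k/μ_k)‖₂²; and λ^{k+1} = λ^k + μ_k(u^{k+1} − v^{k+1}). Then the ADMM iteration converges: there exist u*, v* ∈ ℝ^n with u* = v* such that u^k → u*, v^k → v*, and λ^k/μ_k → 0 as k → ∞. -/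

import Mathlib

open Filter Topology Finset

lemma amgm_sqrt (x y : ℝ) (hx : 0 ≤ x) (hy : 0 ≤ y) : Real.sqrt (x * y) ≤ (x + y) / 2 := by
  have h1 : x * y ≤ ((x + y) / 2) ^ 2 := by nlinarith [sq_nonneg (x - y)]
  calc Real.sqrt (x * y) ≤ Real.sqrt (((x + y) / 2) ^ 2) := Real.sqrt_le_sqrt h1
  _ = (x + y) / 2 := Real.sqrt_sq (by positivity)

lemma nonneg_of_small_t (a b : ℝ) (hb : 0 ≤ b)
    (h : ∀ t : ℝ, 0 < t → t ≤ 1 → 0 ≤ t * a + t ^ 2 * b) : 0 ≤ a := by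
  by_contra hneg
  push_neg at hneg
  have hbp : (0:ℝ) < b + 1 := by linarith
  set t := min 1 (-a / (2 * (b + 1))) with ht
  have htpos : 0 < t := lt_min one_pos (div_pos (by linarith) (by linarith))
  have ht1 : t ≤ 1 := min_le_left _ _
  have h2 : t ≤ -a / (2 * (b + 1)) := min_le_right _ _
  have h3 := h t htpos ht1
  have h4 : 0 ≤ a + t * b := by
    have h5 : 0 ≤ t * (a + t * b) := by nlinarith
    exact nonneg_of_mul_nonneg_right h5 htpos
  have h6 : t * b ≤ -a / 2 := by
    calc t * b ≤ t * (b + 1) := by nlinarith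
      _ ≤ (-a / (2 * (b + 1))) * (b + 1) := mul_le_mul_of_nonneg_right h2 hbp.le
      _ = -a / 2 := by field_simp
  linarith

lemma abel_aux (a c : ℕ → ℝ) (ha : ∀ k, 0 ≤ a k) (hc : Antitone c) (hc0 : ∀ k, 0 ≤ c k) :
    ∀ K, ∑ k ∈ Finset.range K, (a k - a (k + 1)) * c k ≤ a 0 * c 0 - a K * c K := by
  intro K
  induction K with
  | zero => simp
  | succ K ih =>
    rw [Finset.sum_range_succ]
    have h1 : c (K + 1) ≤ c K := hc (Nat.le_succ K)
    nlinarith [ha (K + 1), hc0 (K + 1)]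

lemma convex_pt {p : ℝ} (hp : 1 ≤ p) (x y t : ℝ) (ht0 : 0 ≤ t) (ht1 : t ≤ 1) :
    |x + t * (y - x)| ^ p ≤ |x| ^ p + t * (|y| ^ p - |x| ^ p) := by
  have h1 : |x + t * (y - x)| ≤ (1 - t) * |x| + t * |y| := by
    have hx : x + t * (y - x) = (1 - t) * x + t * y := by ring
    rw [hx]
    calc |(1 - t) * x + t * y| ≤ |(1 - t) * x| + |t * y| := abs_add_le _ _
      _ = (1 - t) * |x| + t * |y| := by
          rw [abs_mul, abs_mul, abs_of_nonneg (by linarith : (0:ℝ) ≤ 1 - t), abs_of_nonneg ht0]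
  have h2 : ((1 - t) * |x| + t * |y|) ^ p ≤ (1 - t) * |x| ^ p + t * |y| ^ p := by
    have := (convexOn_rpow hp).2 (Set.mem_Ici.mpr (abs_nonneg x)) (Set.mem_Ici.mpr (abs_nonneg y))
      (by linarith : (0:ℝ) ≤ 1 - t) ht0 (by ring)
    simpa [smul_eq_mul] using this
  have h3 : |x + t * (y - x)| ^ p ≤ ((1 - t) * |x| + t * |y|) ^ p :=
    Real.rpow_le_rpow (abs_nonneg _) h1 (by linarith)
  calc |x + t * (y - x)| ^ p ≤ (1 - t) * |x| ^ p + t * |y| ^ p := le_trans h3 h2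
    _ = |x| ^ p + t * (|y| ^ p - |x| ^ p) := by ring



open Filter Topology
open scoped BigOperators

noncomputable section

/-- The jump set of a signal `x ∈ ℝⁿ`: the indices `i` with `x i ≠ x (i+1)`. -/
def jumpSet {n : ℕ} (x : Fin n → ℝ) : Set (Fin n) :=
  {i | ∃ h : (i : ℕ) + 1 < n, x i ≠ x ⟨(i : ℕ) + 1, h⟩}

/-- `‖∇x‖₀`: the number of jumps of `x`. -/
def nJumps {n : ℕ} (x : Fin n → ℝ) : ℕ := (jumpSet x).ncard

/-- The ADMM iteration converges: there are `u*, v*` with `u* = v*` such that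
`u^k → u*`, `v^k → v*`, and `λ^k/μ_k → 0`. -/
theorem admm_converges (n m : ℕ)
    (A : Matrix (Fin m) (Fin n) ℝ) (b : Fin m → ℝ)
    (p γ : ℝ) (hp : 1 ≤ p) (hγ : 0 < γ)
    (μ : ℕ → ℝ) (hμpos : ∀ k, 0 < μ k) (hμmono : Monotone μ)
    (hμsum : Summable fun k => 1 / Real.sqrt (μ k))
    (u v lam : ℕ → Fin n → ℝ)
    (hu : ∀ k : ℕ, ∀ w : Fin n → ℝ,
      γ * (nJumps (u (k + 1)) : ℝ) +
          μ k / 2 * ∑ i, (u (k + 1) i - (v k i - lam k i / μ k)) ^ 2 ≤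
        γ * (nJumps w : ℝ) + μ k / 2 * ∑ i, (w i - (v k i - lam k i / μ k)) ^ 2)
    (hv : ∀ k : ℕ, ∀ w : Fin n → ℝ,
      (∑ i, |A.mulVec (v (k + 1)) i - b i| ^ p) +
          μ k / 2 * ∑ i, (v (k + 1) i - (u (k + 1) i + lam k i / μ k)) ^ 2 ≤
        (∑ i, |A.mulVec w i - b i| ^ p) +
          μ k / 2 * ∑ i, (w i - (u (k + 1) i + lam k i / μ k)) ^ 2)
    (hlam : ∀ k : ℕ, lam (k + 1) = lam k + μ k • (u (k + 1) - v (k + 1))) :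
    ∃ ustar vstar : Fin n → ℝ, ustar = vstar ∧
      Tendsto u atTop (𝓝 ustar) ∧ Tendsto v atTop (𝓝 vstar) ∧
      Tendsto (fun k : ℕ => (μ k)⁻¹ • lam k) atTop (𝓝 0) := by
  classical
  set g : (Fin n → ℝ) → ℝ := fun w => ∑ i, |A.mulVec w i - b i| ^ p with hgdef
  have hgnn : ∀ w, 0 ≤ g w := fun w =>
    Finset.sum_nonneg fun i _ => Real.rpow_nonneg (abs_nonneg _) p
  set C : ℝ := γ * n with hCdef
  have hC0 : 0 ≤ C := by positivity
  set r : ℕ → ℝ := fun k => Real.sqrt (μ k) with hrdef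
  have hrpos : ∀ k, 0 < r k := fun k => Real.sqrt_pos.mpr (hμpos k)
  have hrsq : ∀ k, r k * r k = μ k := fun k => Real.mul_self_sqrt (hμpos k).le
  set c : ℕ → ℝ := fun k => 1 / r k with hcdef
  have hcpos : ∀ k, 0 < c k := fun k => by have := hrpos k; positivity
  have hcanti : Antitone c := fun j k hjk =>
    one_div_le_one_div_of_le (hrpos j) (Real.sqrt_le_sqrt (hμmono hjk))
  have hcsum : Summable c := hμsum
  -- number of jumps bounded by n
  have hJ : ∀ x : Fin n → ℝ, (nJumps x : ℝ) ≤ n := by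
    intro x
    have h1 : nJumps x ≤ n := by
      unfold nJumps
      refine le_trans (Set.ncard_le_ncard (Set.subset_univ _) Set.finite_univ) ?_
      rw [Set.ncard_univ, Nat.card_eq_fintype_card, Fintype.card_fin]
    exact_mod_cast h1
  -- Step 1 : u-step bound
  have step1 : ∀ k, ∑ i, (u (k+1) i - v k i + lam k i / μ k) ^ 2 ≤ 2 * C / μ k := by
    intro k
    have h := hu k (fun i => v k i - lam k i / μ k)
    have hz : ∑ i, ((fun i => v k i - lam k i / μ k) i - (v k i - lam k i / μ k)) ^ 2 = 0 := by
      simp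
    rw [hz] at h
    have hb' : γ * (nJumps (fun i => v k i - lam k i / μ k) : ℝ) ≤ C := by
      rw [hCdef]; exact mul_le_mul_of_nonneg_left (hJ _) hγ.le
    have hnn : (0:ℝ) ≤ γ * (nJumps (u (k+1)) : ℝ) := by positivity
    have h2 : μ k / 2 * ∑ i, (u (k+1) i - (v k i - lam k i / μ k)) ^ 2 ≤ C := by linarith
    have heq : ∑ i, (u (k+1) i - v k i + lam k i / μ k) ^ 2
        = ∑ i, (u (k+1) i - (v k i - lam k i / μ k)) ^ 2 :=
      Finset.sum_congr rfl fun i _ => by ring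
    rw [heq, le_div_iff₀ (hμpos k)]
    linarith
  -- pointwise lam recurrence
  have hlam' : ∀ k i, lam (k+1) i = lam k i + μ k * (u (k+1) i - v (k+1) i) := by
    intro k i
    have := congrFun (hlam k) i
    simpa using this
  set d : ℕ → Fin n → ℝ := fun k i => v (k+1) i - v k i with hddef
  set T : ℕ → ℝ := fun k => ∑ i, (lam k i) ^ 2 with hTdef
  have hTnn : ∀ k, 0 ≤ T k := fun k => Finset.sum_nonneg fun i _ => sq_nonneg _
  set Qd : ℕ → ℝ := fun k => ∑ i, (d k i) ^ 2 with hQddef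
  have hQdnn : ∀ k, 0 ≤ Qd k := fun k => Finset.sum_nonneg fun i _ => sq_nonneg _
  -- subgradient inequality
  have SG : ∀ k, ∑ i, lam (k+1) i * (v k i - v (k+1) i) ≤ g (v k) - g (v (k+1)) := by
    intro k
    have hμk := hμpos k
    have hμne : μ k ≠ 0 := hμk.ne'
    set e : Fin n → ℝ := fun i => v k i - v (k+1) i with hedef
    have key : ∀ t : ℝ, 0 < t → t ≤ 1 →
        0 ≤ t * (g (v k) - g (v (k+1)) + μ k * ∑ i, (v (k+1) i - (u (k+1) i + lam k i / μ k)) * e i)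
          + t ^ 2 * (μ k / 2 * ∑ i, (e i) ^ 2) := by
      intro t ht0 ht1
      have h := hv k (fun i => v (k+1) i + t * e i)
      -- convexity bound
      have hmv : ∀ j, A.mulVec (fun i => v (k+1) i + t * e i) j
          = (A.mulVec (v (k+1)) j) + t * (A.mulVec (v k) j - A.mulVec (v (k+1)) j) := by
        intro j
        simp only [Matrix.mulVec, dotProduct, hedef]
        rw [← Finset.sum_sub_distrib, Finset.mul_sum, ← Finset.sum_add_distrib]
        exact Finset.sum_congr rfl fun i _ => by ring
      have hconv : ∑ i, |A.mulVec (fun i => v (k+1) i + t * e i) i - b i| ^ p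
          ≤ g (v (k+1)) + t * (g (v k) - g (v (k+1))) := by
        calc ∑ i, |A.mulVec (fun i => v (k+1) i + t * e i) i - b i| ^ p
            ≤ ∑ i, (|A.mulVec (v (k+1)) i - b i| ^ p
              + t * (|A.mulVec (v k) i - b i| ^ p - |A.mulVec (v (k+1)) i - b i| ^ p)) := by
              refine Finset.sum_le_sum fun i _ => ?_
              have := convex_pt hp (A.mulVec (v (k+1)) i - b i) (A.mulVec (v k) i - b i) t ht0.le ht1
              calc |A.mulVec (fun i => v (k+1) i + t * e i) i - b i| ^ p
                  = |(A.mulVec (v (k+1)) i - b i)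
                    + t * ((A.mulVec (v k) i - b i) - (A.mulVec (v (k+1)) i - b i))| ^ p := by
                    rw [hmv i]; ring_nf
                _ ≤ _ := this
          _ = g (v (k+1)) + t * (g (v k) - g (v (k+1))) := by
              rw [Finset.sum_add_distrib, ← Finset.mul_sum, Finset.sum_sub_distrib]
      -- quadratic expansion
      have hquad : ∑ i, ((fun i => v (k+1) i + t * e i) i - (u (k+1) i + lam k i / μ k)) ^ 2
          = ∑ i, (v (k+1) i - (u (k+1) i + lam k i / μ k)) ^ 2
            + t * (2 * ∑ i, (v (k+1) i - (u (k+1) i + lam k i / μ k)) * e i)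
            + t ^ 2 * ∑ i, (e i) ^ 2 := by
        have hpt : ∀ i, ((v (k+1) i + t * e i) - (u (k+1) i + lam k i / μ k)) ^ 2
            = (v (k+1) i - (u (k+1) i + lam k i / μ k)) ^ 2
              + t * (2 * ((v (k+1) i - (u (k+1) i + lam k i / μ k)) * e i))
              + t ^ 2 * (e i) ^ 2 := fun i => by ring
        simp only [hpt]
        rw [Finset.sum_add_distrib, Finset.sum_add_distrib, ← Finset.mul_sum, ← Finset.mul_sum,
          ← Finset.mul_sum]
      rw [hquad] at h
      simp only [hgdef] at hconv h ⊢
      nlinarith [h, hconv, hμk]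
    have hA := nonneg_of_small_t _ _ (by positivity) key
    have hid : μ k * ∑ i, (v (k+1) i - (u (k+1) i + lam k i / μ k)) * e i
        = - ∑ i, lam (k+1) i * e i := by
      rw [Finset.mul_sum, ← Finset.sum_neg_distrib]
      refine Finset.sum_congr rfl fun i _ => ?_
      rw [hlam' k i]
      field_simp
      ring
    rw [hid] at hA
    simp only [hedef] at hA ⊢
    linarith
  -- key per-step inequality
  have KI : ∀ k, T (k+1) / (μ k * r k) + r k * Qd k
      ≤ 2 * C * c k + 2 * (g (v k) - g (v (k+1))) * c k := by
    intro k
    have hμk := hμpos k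
    have hr := hrpos k
    have hrne : r k ≠ 0 := hr.ne'
    have hμne : μ k ≠ 0 := hμk.ne'
    have hμrr : μ k = r k * r k := (hrsq k).symm
    have heq : ∀ i, u (k+1) i - v k i + lam k i / μ k = lam (k+1) i / μ k + d k i := by
      intro i
      simp only [hddef]
      rw [hlam' k i]
      field_simp
      ring
    have h2 : ∑ i, (lam (k+1) i / μ k + d k i) ^ 2 ≤ 2 * C / μ k := by
      calc ∑ i, (lam (k+1) i / μ k + d k i) ^ 2
          = ∑ i, (u (k+1) i - v k i + lam k i / μ k) ^ 2 :=
            Finset.sum_congr rfl fun i _ => by rw [heq i]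
        _ ≤ 2 * C / μ k := step1 k
    have hexp : ∑ i, (lam (k+1) i / μ k + d k i) ^ 2
        = T (k+1) / (μ k) ^ 2 + 2 / μ k * ∑ i, lam (k+1) i * d k i + Qd k := by
      simp only [hTdef, hQddef]
      rw [Finset.sum_div, Finset.mul_sum, ← Finset.sum_add_distrib, ← Finset.sum_add_distrib]
      refine Finset.sum_congr rfl fun i _ => ?_
      field_simp
      ring
    have hip : g (v (k+1)) - g (v k) ≤ ∑ i, lam (k+1) i * d k i := by
      have he : ∑ i, lam (k+1) i * d k i = - ∑ i, lam (k+1) i * (v k i - v (k+1) i) := by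
        rw [← Finset.sum_neg_distrib]
        exact Finset.sum_congr rfl fun i _ => by simp only [hddef]; ring
      rw [he]
      linarith [SG k]
    have h3 : T (k+1) / (μ k) ^ 2 + Qd k
        ≤ 2 * C / μ k + 2 / μ k * (g (v k) - g (v (k+1))) := by
      rw [hexp] at h2
      have h4 : 2 / μ k * (g (v (k+1)) - g (v k)) ≤ 2 / μ k * ∑ i, lam (k+1) i * d k i :=
        mul_le_mul_of_nonneg_left hip (by positivity)
      linarith
    have h5 := mul_le_mul_of_nonneg_right h3 hr.le
    have e1 : (T (k+1) / (μ k) ^ 2 + Qd k) * r k = T (k+1) / (μ k * r k) + r k * Qd k := by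
      rw [hμrr]; field_simp
    have e2 : (2 * C / μ k + 2 / μ k * (g (v k) - g (v (k+1)))) * r k
        = 2 * C * c k + 2 * (g (v k) - g (v (k+1))) * c k := by
      simp only [hcdef]
      rw [hμrr]; field_simp
    rw [e1, e2] at h5
    exact h5
  set a : ℕ → ℝ := fun k => g (v k) with hadef
  have hann : ∀ k, 0 ≤ a k := fun k => hgnn (v k)
  set M : ℝ := ∑' k, c k with hMdef
  set S : ℝ := 2 * C * M + 2 * (a 0 * c 0) with hSdef
  have hpartial : ∀ K, ∑ k ∈ Finset.range K, (T (k+1) / (μ k * r k) + r k * Qd k) ≤ S := by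
    intro K
    have h1 : ∑ k ∈ Finset.range K, (T (k+1) / (μ k * r k) + r k * Qd k)
        ≤ ∑ k ∈ Finset.range K, (2 * C * c k + 2 * (a k - a (k+1)) * c k) :=
      Finset.sum_le_sum fun k _ => KI k
    have h2 : ∑ k ∈ Finset.range K, (2 * C * c k + 2 * (a k - a (k+1)) * c k)
        = 2 * C * (∑ k ∈ Finset.range K, c k)
          + 2 * ∑ k ∈ Finset.range K, (a k - a (k+1)) * c k := by
      rw [Finset.sum_add_distrib, Finset.mul_sum, Finset.mul_sum]
      congr 1
      exact Finset.sum_congr rfl fun k _ => by ring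
    have h3 : ∑ k ∈ Finset.range K, c k ≤ M := Summable.sum_le_tsum _ (fun i _ => (hcpos i).le) hcsum
    have h4 := abel_aux a c hann hcanti (fun k => (hcpos k).le) K
    have h5 : 0 ≤ a K * c K := mul_nonneg (hann K) (hcpos K).le
    have h6 : 2 * C * (∑ k ∈ Finset.range K, c k) ≤ 2 * C * M :=
      mul_le_mul_of_nonneg_left h3 (by positivity)
    rw [h2] at h1
    rw [hSdef]
    linarith
  set f1 : ℕ → ℝ := fun k => T (k+1) / (μ k * r k) with hf1def
  set f2 : ℕ → ℝ := fun k => r k * Qd k with hf2def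
  have hf1nn : ∀ k, 0 ≤ f1 k := fun k =>
    div_nonneg (hTnn (k+1)) (mul_nonneg (hμpos k).le (hrpos k).le)
  have hf2nn : ∀ k, 0 ≤ f2 k := fun k => mul_nonneg (hrpos k).le (hQdnn k)
  have hsum12 : Summable (fun k => f1 k + f2 k) :=
    summable_of_sum_range_le (fun k => add_nonneg (hf1nn k) (hf2nn k)) hpartial
  have hf1sum : Summable f1 := by
    refine Summable.of_nonneg_of_le hf1nn (fun k => ?_) hsum12
    linarith [hf2nn k]
  have hf2sum : Summable f2 := by
    refine Summable.of_nonneg_of_le hf2nn (fun k => ?_) hsum12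
    linarith [hf1nn k]
  set ε : ℕ → ℝ := fun k => Real.sqrt (T (k+1)) / μ k with hεdef
  set δ : ℕ → ℝ := fun k => Real.sqrt (Qd k) with hδdef
  have hεle : ∀ k, ε k ≤ (f1 k + c k) / 2 := by
    intro k
    have hμk := hμpos k
    have e3 : f1 k * c k = T (k+1) / (μ k * μ k) := by
      calc f1 k * c k = T (k+1) / (μ k * (r k * r k)) := by
            simp only [hf1def, hcdef]
            rw [div_mul_div_comm, mul_one, mul_assoc]
        _ = T (k+1) / (μ k * μ k) := by rw [hrsq k]
    have e4 : ε k = Real.sqrt (f1 k * c k) := by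
      rw [e3]
      simp only [hεdef]
      rw [Real.sqrt_div (hTnn (k+1)), Real.sqrt_mul_self hμk.le]
    rw [e4]
    exact amgm_sqrt _ _ (hf1nn k) (hcpos k).le
  have hδle : ∀ k, δ k ≤ (f2 k + c k) / 2 := by
    intro k
    have e3 : f2 k * c k = Qd k := by
      simp only [hf2def, hcdef]
      rw [mul_one_div, mul_comm (r k) (Qd k), mul_div_assoc, div_self (hrpos k).ne', mul_one]
    have e4 : δ k = Real.sqrt (f2 k * c k) := by rw [e3]
    rw [e4]
    exact amgm_sqrt _ _ (hf2nn k) (hcpos k).le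
  have hεsum : Summable ε := by
    refine Summable.of_nonneg_of_le (fun k => div_nonneg (Real.sqrt_nonneg _) (hμpos k).le) hεle ?_
    exact (hf1sum.add hcsum).div_const 2
  have hδsum : Summable δ := by
    refine Summable.of_nonneg_of_le (fun k => Real.sqrt_nonneg _) hδle ?_
    exact (hf2sum.add hcsum).div_const 2
  have habs_d : ∀ k i, |v (k+1) i - v k i| ≤ δ k := by
    intro k i
    rw [← Real.sqrt_sq_eq_abs]
    exact Real.sqrt_le_sqrt
      (Finset.single_le_sum (f := fun j => (d k j) ^ 2) (fun j _ => sq_nonneg _)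
        (Finset.mem_univ i))
  have habs_lam : ∀ k i, |lam k i| ≤ Real.sqrt (T k) := by
    intro k i
    rw [← Real.sqrt_sq_eq_abs]
    exact Real.sqrt_le_sqrt
      (Finset.single_le_sum (f := fun j => (lam k j) ^ 2) (fun j _ => sq_nonneg _)
        (Finset.mem_univ i))
  have hdsum : ∀ i, Summable fun k => v (k+1) i - v k i := by
    intro i
    apply Summable.of_abs
    exact Summable.of_nonneg_of_le (fun k => abs_nonneg _) (fun k => habs_d k i) hδsum
  have hvt : Tendsto v atTop (𝓝 (fun i => v 0 i + ∑' k, (v (k+1) i - v k i))) := by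
    rw [tendsto_pi_nhds]
    intro i
    have h1 : Tendsto (fun K => ∑ k ∈ Finset.range K, (v (k+1) i - v k i)) atTop
        (𝓝 (∑' k, (v (k+1) i - v k i))) := (hdsum i).hasSum.tendsto_sum_nat
    have h2 : Tendsto (fun K : ℕ => v 0 i + ∑ k ∈ Finset.range K, (v (k+1) i - v k i)) atTop
        (𝓝 (v 0 i + ∑' k, (v (k+1) i - v k i))) := tendsto_const_nhds.add h1
    refine Tendsto.congr (fun K => ?_) h2
    rw [Finset.sum_range_sub (fun k => v k i) K]
    ring
  have hε0 : Tendsto ε atTop (𝓝 0) := hεsum.tendsto_atTop_zero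
  have hεle' : ∀ k, Real.sqrt (T (k+1)) / μ (k+1) ≤ ε k := fun k =>
    div_le_div_of_nonneg_left (Real.sqrt_nonneg _) (hμpos k) (hμmono (Nat.le_succ k))
  have hlamt : Tendsto (fun k : ℕ => (μ k)⁻¹ • lam k) atTop (𝓝 0) := by
    rw [tendsto_pi_nhds]
    intro i
    show Tendsto (fun k => (μ k)⁻¹ * lam k i) atTop (𝓝 0)
    apply (tendsto_add_atTop_iff_nat 1).mp
    refine squeeze_zero_norm (fun k => ?_) hε0
    calc ‖(μ (k+1))⁻¹ * lam (k+1) i‖ = |lam (k+1) i| / μ (k+1) := by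
          rw [Real.norm_eq_abs, abs_mul, abs_inv, abs_of_pos (hμpos (k+1))]
          ring
      _ ≤ Real.sqrt (T (k+1)) / μ (k+1) :=
          (div_le_div_iff_of_pos_right (hμpos (k+1))).mpr (habs_lam (k+1) i)
      _ ≤ ε k := hεle' k
  have hut : Tendsto u atTop (𝓝 (fun i => v 0 i + ∑' k, (v (k+1) i - v k i))) := by
    rw [tendsto_pi_nhds]
    intro i
    show Tendsto (fun k => u k i) atTop (𝓝 (v 0 i + ∑' k, (v (k+1) i - v k i)))
    apply (tendsto_add_atTop_iff_nat 2).mp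
    have hvi : Tendsto (fun k => v (k+2) i) atTop (𝓝 (v 0 i + ∑' k, (v (k+1) i - v k i))) := by
      have h0 := tendsto_pi_nhds.mp hvt i
      exact (tendsto_add_atTop_iff_nat 2).mpr h0
    have hpert : Tendsto (fun k => u (k+2) i - v (k+2) i) atTop (𝓝 0) := by
      refine squeeze_zero_norm (a := fun k => ε (k+1) + ε k) (fun k => ?_) ?_
      · have hμ1 := hμpos (k+1)
        have hl2 : lam (k+2) i = lam (k+1) i + μ (k+1) * (u (k+2) i - v (k+2) i) :=
          hlam' (k+1) i
        have hid : u (k+2) i - v (k+2) i = (lam (k+2) i - lam (k+1) i) / μ (k+1) := by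
          rw [hl2]
          field_simp
          ring
        rw [Real.norm_eq_abs, hid, abs_div, abs_of_pos hμ1]
        have h2' : |lam (k+2) i - lam (k+1) i| ≤ Real.sqrt (T (k+2)) + Real.sqrt (T (k+1)) := by
          calc |lam (k+2) i - lam (k+1) i| ≤ |lam (k+2) i| + |lam (k+1) i| := abs_sub _ _
            _ ≤ _ := add_le_add (habs_lam (k+2) i) (habs_lam (k+1) i)
        calc |lam (k+2) i - lam (k+1) i| / μ (k+1)
            ≤ (Real.sqrt (T (k+2)) + Real.sqrt (T (k+1))) / μ (k+1) :=
              (div_le_div_iff_of_pos_right hμ1).mpr h2'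
          _ = Real.sqrt (T (k+2)) / μ (k+1) + Real.sqrt (T (k+1)) / μ (k+1) := add_div _ _ _
          _ ≤ ε (k+1) + ε k := add_le_add (le_refl _) (hεle' k)
      · have h1 : Tendsto (fun k => ε (k+1)) atTop (𝓝 0) := (tendsto_add_atTop_iff_nat 1).mpr hε0
        simpa using h1.add hε0
    have h3 := hpert.add hvi
    refine Tendsto.congr (fun k => by ring) (by simpa using h3)
  exact ⟨_, _, rfl, hut, hvt, hlamt⟩
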